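/- The group PΓ_0(2) = Γ_0(2)/{±I} is generated by the images of the matrices T = [[1,1],[0,1]] and R = [[1,-1],[2,-1]]. -/

import Mathlib

/-- `SL(2, ℤ)`. -/
abbrev SL2Z := Matrix.SpecialLinearGroup (Fin 2) ℤ

/-- The element `-I` of `SL(2, ℤ)`. -/
def negOne : SL2Z := ⟨!![-1, 0; 0, -1], by norm_num [Matrix.det_fin_two_of]⟩

lemma negOne_mem_center : negOne ∈ Subgroup.center SL2Z := by
  rw [Subgroup.mem_center_iff]
  intro g
  apply Subtype.ext
  show (g : Matrix (Fin 2) (Fin 2) ℤ) * negOne = (negOne : Matrix (Fin 2) (Fin 2) ℤ) * g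
  ext i j
  fin_cases i <;> fin_cases j <;>
    simp [negOne, Matrix.mul_apply, Fin.sum_univ_succ]

instance : (Subgroup.zpowers negOne).Normal := by
  constructor
  intro x hx g
  obtain ⟨k, rfl⟩ := hx
  have hc : Commute g negOne := Subgroup.mem_center_iff.mp negOne_mem_center g
  show g * negOne ^ k * g⁻¹ ∈ Subgroup.zpowers negOne
  have h : g * negOne ^ k * g⁻¹ = negOne ^ k := by
    rw [(hc.zpow_right k).eq, mul_assoc, mul_inv_cancel, mul_one]
  rw [h]
  exact ⟨k, rfl⟩

/-- `PSL(2, ℤ) = SL(2, ℤ)/{±I}`. -/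
abbrev PSL2Z := SL2Z ⧸ Subgroup.zpowers negOne

/-- The matrix `T = [[1, 1], [0, 1]]` as an element of `SL(2, ℤ)`. -/
def Tmat : SL2Z := ⟨!![1, 1; 0, 1], by norm_num [Matrix.det_fin_two_of]⟩

/-- The matrix `R = [[1, -1], [2, -1]]` as an element of `SL(2, ℤ)`. -/
def Rmat : SL2Z := ⟨!![1, -1; 2, -1], by norm_num [Matrix.det_fin_two_of]⟩

/-- `PΓ₀(2) = Γ₀(2)/{±I}`, the image of `Γ₀(2)` in `PSL(2, ℤ)`. -/
def PGamma0Two : Subgroup PSL2Z :=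
  (CongruenceSubgroup.Gamma0 2).map (QuotientGroup.mk' (Subgroup.zpowers negOne))

def Lmat : SL2Z := ⟨!![1, 0; 2, 1], by norm_num [Matrix.det_fin_two_of]⟩

lemma coe_Tmat_zpow (n : ℤ) : ((Tmat ^ n : SL2Z) : Matrix (Fin 2) (Fin 2) ℤ) = !![1, n; 0, 1] := by
  induction n using Int.induction_on with
  | zero => simp [Matrix.one_fin_two]
  | succ k ih =>
      rw [zpow_add_one, Matrix.SpecialLinearGroup.coe_mul, ih]
      simp [Tmat, Matrix.mul_fin_two]; ring_nf
  | pred k ih =>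
      rw [zpow_sub_one, Matrix.SpecialLinearGroup.coe_mul, ih,
        Matrix.SpecialLinearGroup.coe_inv, Matrix.adjugate_fin_two]
      simp [Tmat, Matrix.mul_fin_two]; ring_nf

lemma coe_Lmat_zpow (n : ℤ) : ((Lmat ^ n : SL2Z) : Matrix (Fin 2) (Fin 2) ℤ) = !![1, 0; 2*n, 1] := by
  induction n using Int.induction_on with
  | zero => simp [Matrix.one_fin_two]
  | succ k ih =>
      rw [zpow_add_one, Matrix.SpecialLinearGroup.coe_mul, ih]
      simp [Lmat, Matrix.mul_fin_two]; ring_nf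
  | pred k ih =>
      rw [zpow_sub_one, Matrix.SpecialLinearGroup.coe_mul, ih,
        Matrix.SpecialLinearGroup.coe_inv, Matrix.adjugate_fin_two]
      simp [Lmat, Matrix.mul_fin_two]; ring_nf

lemma negOne_eq : negOne = Rmat * Rmat := by
  apply Subtype.ext
  show (negOne : Matrix (Fin 2) (Fin 2) ℤ) = (Rmat : Matrix (Fin 2) (Fin 2) ℤ) * Rmat
  simp [negOne, Rmat, Matrix.mul_fin_two]

lemma hTcl : Tmat ∈ Subgroup.closure {Tmat, Rmat} := Subgroup.subset_closure (by simp)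
lemma hRcl : Rmat ∈ Subgroup.closure {Tmat, Rmat} := Subgroup.subset_closure (by simp)

lemma negOne_mem_cl : negOne ∈ Subgroup.closure {Tmat, Rmat} := by
  rw [negOne_eq]; exact mul_mem hRcl hRcl

lemma Lmat_eq : Lmat = Rmat⁻¹ * (Tmat * (Rmat * Rmat)) := by
  rw [eq_inv_mul_iff_mul_eq]
  apply Subtype.ext
  show (Rmat : Matrix (Fin 2) (Fin 2) ℤ) * Lmat
      = (Tmat : Matrix (Fin 2) (Fin 2) ℤ) * ((Rmat : Matrix (Fin 2) (Fin 2) ℤ) * Rmat)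
  simp [Tmat, Rmat, Lmat, Matrix.mul_fin_two]

lemma hLcl : Lmat ∈ Subgroup.closure {Tmat, Rmat} := by
  rw [Lmat_eq]
  exact mul_mem (inv_mem hRcl) (mul_mem hTcl (mul_mem hRcl hRcl))

lemma gamma0_le_cl (n : ℕ) : ∀ g : SL2Z, g ∈ CongruenceSubgroup.Gamma0 2 →
    ((g : Matrix (Fin 2) (Fin 2) ℤ) 1 0).natAbs = n → g ∈ Subgroup.closure {Tmat, Rmat} := by
  induction n using Nat.strong_induction_on with
  | _ n ih =>
  intro g hg hn
  set a : ℤ := (g : Matrix (Fin 2) (Fin 2) ℤ) 0 0 with ha_def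
  set b : ℤ := (g : Matrix (Fin 2) (Fin 2) ℤ) 0 1 with hb_def
  set c : ℤ := (g : Matrix (Fin 2) (Fin 2) ℤ) 1 0 with hc_def
  set d : ℤ := (g : Matrix (Fin 2) (Fin 2) ℤ) 1 1 with hd_def
  have hdet : a * d - b * c = 1 := by
    have h2 := g.2
    rwa [Matrix.det_fin_two] at h2
  have hceven : (2 : ℤ) ∣ c := by
    rw [CongruenceSubgroup.Gamma0_mem] at hg
    exact (ZMod.intCast_zmod_eq_zero_iff_dvd _ 2).mp hg
  obtain ⟨k, hk⟩ := hceven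
  have hgeta : (g : Matrix (Fin 2) (Fin 2) ℤ) = !![a, b; c, d] := by
    rw [Matrix.eta_fin_two (g : Matrix (Fin 2) (Fin 2) ℤ)]
  by_cases hc0 : c = 0
  · have had : a * d = 1 := by rw [hc0] at hdet; linarith
    rcases Int.mul_eq_one_iff_eq_one_or_neg_one.mp had with ⟨ha1, hd1⟩ | ⟨ha1, hd1⟩
    · have hge : g = Tmat ^ b := by
        apply Subtype.ext
        rw [coe_Tmat_zpow, hgeta, ha1, hc0, hd1]
      rw [hge]
      exact zpow_mem hTcl b
    · have hge : g = negOne * Tmat ^ (-b) := by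
        apply Subtype.ext
        show (g : Matrix (Fin 2) (Fin 2) ℤ)
            = (negOne : Matrix (Fin 2) (Fin 2) ℤ) * ((Tmat ^ (-b) : SL2Z) : Matrix (Fin 2) (Fin 2) ℤ)
        rw [coe_Tmat_zpow, hgeta, ha1, hc0, hd1]
        ext i j
        fin_cases i <;> fin_cases j <;> simp [negOne, Matrix.mul_fin_two]
      rw [hge]
      exact mul_mem negOne_mem_cl (zpow_mem hTcl (-b))
  · have ha_odd : Odd a := by
      have h1 : Odd (a * d) := ⟨b * k, by rw [hk] at hdet; linarith⟩
      exact (Int.odd_mul.mp h1).1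
    set q : ℤ := -(a / c) with hq_def
    set a1 : ℤ := a % c with ha1_def
    have ha1 : a1 = a + q * c := by rw [ha1_def, hq_def, Int.emod_def]; ring
    have ha1_nonneg : 0 ≤ a1 := Int.emod_nonneg a hc0
    have ha1_lt : a1 < (c.natAbs : ℤ) := by
      have h3 := Int.emod_lt a hc0
      exact h3
    have ha1_odd : a1 % 2 = 1 := by
      apply Int.odd_iff.mp
      obtain ⟨t, ht⟩ := ha_odd
      exact ⟨t + q * k, by rw [ha1, hk, ht]; ring⟩
    have ha1_pos : 0 < a1 := by omega
    set k2 : ℤ := (c + a1) / (2 * a1) with hk2_def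
    set c' : ℤ := c + 2 * (-k2) * a1 with hc'_def
    have hcc : c' = (c + a1) % (2 * a1) - a1 := by
      rw [hc'_def, hk2_def, Int.emod_def]; ring
    have hmod_nonneg : 0 ≤ (c + a1) % (2 * a1) := Int.emod_nonneg _ (by omega)
    have hmod_lt : (c + a1) % (2 * a1) < 2 * a1 := Int.emod_lt_of_pos _ (by omega)
    have hc'_lb : -a1 ≤ c' := by omega
    have hc'_ub : c' < a1 := by omega
    have hc'_even : (2 : ℤ) ∣ c' := ⟨k - k2 * a1, by rw [hc'_def, hk]; ring⟩
    have hc'_mod : c' % 2 = 0 := by omega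
    have hnatlt : c'.natAbs < n := by omega
    set g2 : SL2Z := Lmat ^ (-k2) * (Tmat ^ q * g) with hg2_def
    have hg2coe : (g2 : Matrix (Fin 2) (Fin 2) ℤ)
        = !![a + q * c, b + q * d; c + 2 * (-k2) * (a + q * c), 2 * (-k2) * (b + q * d) + d] := by
      rw [hg2_def, Matrix.SpecialLinearGroup.coe_mul, Matrix.SpecialLinearGroup.coe_mul,
        coe_Lmat_zpow, coe_Tmat_zpow, hgeta]
      ext i j
      fin_cases i <;> fin_cases j <;> simp [Matrix.mul_fin_two] <;> ring
    have hg2_10 : (g2 : Matrix (Fin 2) (Fin 2) ℤ) 1 0 = c' := by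
      rw [hg2coe, hc'_def, ha1]
      simp
    have hg2mem : g2 ∈ CongruenceSubgroup.Gamma0 2 := by
      rw [CongruenceSubgroup.Gamma0_mem]
      show (((g2 : Matrix (Fin 2) (Fin 2) ℤ) 1 0 : ℤ) : ZMod 2) = 0
      rw [hg2_10]
      exact (ZMod.intCast_zmod_eq_zero_iff_dvd _ 2).mpr hc'_even
    have hg2cl : g2 ∈ Subgroup.closure {Tmat, Rmat} :=
      ih c'.natAbs hnatlt g2 hg2mem (by rw [hg2_10])
    have hge : g = Tmat ^ (-q) * (Lmat ^ k2 * g2) := by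
      rw [hg2_def]; group
    rw [hge]
    exact mul_mem (zpow_mem hTcl (-q)) (mul_mem (zpow_mem hLcl k2) hg2cl)

/-- `PΓ₀(2)` is generated by the images of `T = [[1,1],[0,1]]` and `R = [[1,-1],[2,-1]]`. -/
theorem PGamma0_generated :
    Subgroup.closure {(QuotientGroup.mk Tmat : PSL2Z), (QuotientGroup.mk Rmat : PSL2Z)}
      = PGamma0Two := by
  apply le_antisymm
  · rw [Subgroup.closure_le]
    intro x hx
    simp only [Set.mem_insert_iff, Set.mem_singleton_iff] at hx
    rcases hx with rfl | rfl
    · exact ⟨Tmat, by simp only [SetLike.mem_coe]; rw [CongruenceSubgroup.Gamma0_mem]; norm_num [Tmat], rfl⟩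
    · exact ⟨Rmat, by simp only [SetLike.mem_coe]; rw [CongruenceSubgroup.Gamma0_mem]; norm_num [Rmat]; decide, rfl⟩
  · rintro x ⟨g, hg, rfl⟩
    have hcl : g ∈ Subgroup.closure {Tmat, Rmat} :=
      gamma0_le_cl ((g : Matrix (Fin 2) (Fin 2) ℤ) 1 0).natAbs g hg rfl
    have hmem := Subgroup.mem_map_of_mem (QuotientGroup.mk' (Subgroup.zpowers negOne)) hcl
    rw [MonoidHom.map_closure, Set.image_insert_eq, Set.image_singleton] at hmem
    exact hmem
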